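/- Let $g : \mathbb{R} \to [0,\infty)$, $f : \mathbb{R} \to (0,\infty)$, and reals $X_1,\dots,X_n$. Suppose $\sup_x |\widehat{f}(x) - f(x)| \le \delta$ and let $e > 0$, $\widehat{f}_e = \max(\widehat{f}, e)$. Then $\left| \frac{1}{n}\sum_{i=1}^n g(X_i)\Big(\frac{1}{\widehat{f}_e(X_i)} - \frac{1}{f(X_i)}\Big) \right| \le \Big(\frac{1}{n}\sum_{i=1}^n \frac{g(X_i)}{f(X_i)^2}\Big) e + \Big(\frac{1}{n}\sum_{i=1}^n g(X_i)\Big) \frac{\delta}{e^2}$. -/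
import Mathlib


/-- Deterministic core estimate (the `A + B` bound) in the proof of Proposition 1. -/
theorem wr_core_estimate (n : ℕ) (g f fhat : ℝ → ℝ) (X : Fin n → ℝ)
    (hg : ∀ x, 0 ≤ g x) (hf : ∀ x, 0 < f x)
    (δ : ℝ) (hδ : ∀ x, |fhat x - f x| ≤ δ)
    (e : ℝ) (he : 0 < e) :
    |(1 / n : ℝ) * ∑ i, g (X i) * (1 / max (fhat (X i)) e - 1 / f (X i))| ≤
      ((1 / n : ℝ) * ∑ i, g (X i) / (f (X i)) ^ 2) * e
        + ((1 / n : ℝ) * ∑ i, g (X i)) * (δ / e ^ 2) := by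
  have hδ0 : 0 ≤ δ := (abs_nonneg _).trans (hδ 0)
  have key : ∀ x : ℝ, |1 / max (fhat x) e - 1 / f x| ≤ e / (f x) ^ 2 + δ / e ^ 2 := by
    intro x
    set a := max (fhat x) e with hadef
    set b := max (f x) e with hbdef
    set c := f x with hcdef
    have ha : e ≤ a := le_max_right _ _
    have hb : e ≤ b := le_max_right _ _
    have hc : 0 < c := hf x
    have ha0 : 0 < a := lt_of_lt_of_le he ha
    have hb0 : 0 < b := lt_of_lt_of_le he hb
    have h1 : |1 / a - 1 / b| ≤ δ / e ^ 2 := by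
      have heq : 1 / a - 1 / b = (b - a) / (a * b) := by
        field_simp
      rw [heq, abs_div, abs_of_pos (mul_pos ha0 hb0)]
      have hnum : |b - a| ≤ δ := by
        have := abs_max_sub_max_le_abs (f x) (fhat x) e
        calc |b - a| ≤ |f x - fhat x| := this
          _ = |fhat x - f x| := abs_sub_comm _ _
          _ ≤ δ := hδ x
      have hden : e ^ 2 ≤ a * b := by
        have := mul_le_mul ha hb he.le ha0.le
        nlinarith
      exact div_le_div₀ hδ0 hnum (by positivity) hden
    have h2 : |1 / b - 1 / c| ≤ e / c ^ 2 := by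
      rcases le_or_gt e c with h | h
      · have : b = c := max_eq_left h
        rw [this, sub_self, abs_zero]
        positivity
      · have hbe : b = e := max_eq_right h.le
        have hle : 1 / b ≤ 1 / c := by
          apply one_div_le_one_div_of_le hc
          rw [hbe]; exact h.le
        rw [abs_of_nonpos (by linarith)]
        have heq : -(1 / b - 1 / c) = (b - c) / (c * b) := by
          rw [neg_sub, div_sub_div _ _ (ne_of_gt hc) (ne_of_gt hb0), one_mul, mul_one]
        rw [heq, hbe]
        have : (e - c) / (c * e) ≤ e / c ^ 2 := by
          apply div_le_div₀ he.le (by linarith) (by positivity)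
          nlinarith
        simpa using this
    calc |1 / a - 1 / c| ≤ |1 / a - 1 / b| + |1 / b - 1 / c| := abs_sub_le _ _ _
      _ ≤ δ / e ^ 2 + e / c ^ 2 := add_le_add h1 h2
      _ = e / c ^ 2 + δ / e ^ 2 := add_comm _ _
  have hn : (0:ℝ) ≤ 1 / n := by positivity
  have hsum : |∑ i, g (X i) * (1 / max (fhat (X i)) e - 1 / f (X i))| ≤
      (∑ i, g (X i) / (f (X i)) ^ 2) * e + (∑ i, g (X i)) * (δ / e ^ 2) := by
    calc |∑ i, g (X i) * (1 / max (fhat (X i)) e - 1 / f (X i))|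
        ≤ ∑ i, |g (X i) * (1 / max (fhat (X i)) e - 1 / f (X i))| :=
          Finset.abs_sum_le_sum_abs _ _
      _ ≤ ∑ i, (g (X i) / (f (X i)) ^ 2 * e + g (X i) * (δ / e ^ 2)) := by
          apply Finset.sum_le_sum
          intro i _
          rw [abs_mul, abs_of_nonneg (hg _)]
          have := key (X i)
          have hb := mul_le_mul_of_nonneg_left this (hg (X i))
          calc g (X i) * |1 / max (fhat (X i)) e - 1 / f (X i)|
              ≤ g (X i) * (e / (f (X i)) ^ 2 + δ / e ^ 2) := hb
            _ = g (X i) / (f (X i)) ^ 2 * e + g (X i) * (δ / e ^ 2) := by ring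
      _ = (∑ i, g (X i) / (f (X i)) ^ 2) * e + (∑ i, g (X i)) * (δ / e ^ 2) := by
          rw [Finset.sum_add_distrib, ← Finset.sum_mul, ← Finset.sum_mul]
  calc |(1 / n : ℝ) * ∑ i, g (X i) * (1 / max (fhat (X i)) e - 1 / f (X i))|
      = (1 / n : ℝ) * |∑ i, g (X i) * (1 / max (fhat (X i)) e - 1 / f (X i))| := by
        rw [abs_mul, abs_of_nonneg hn]
    _ ≤ (1 / n : ℝ) * ((∑ i, g (X i) / (f (X i)) ^ 2) * e + (∑ i, g (X i)) * (δ / e ^ 2)) :=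
        mul_le_mul_of_nonneg_left hsum hn
    _ = ((1 / n : ℝ) * ∑ i, g (X i) / (f (X i)) ^ 2) * e
        + ((1 / n : ℝ) * ∑ i, g (X i)) * (δ / e ^ 2) := by ring
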